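/- Let S be a set of n ≥ 3 points in convex position in the plane and let u, v be distinct points of S. Then the spanning star star(u) can be transformed into the spanning star star(v) by a sequence of at most n − 2 slides. -/

import Mathlib

open Set

/-- Points of the plane. -/
abbrev Pt : Type := ℝ × ℝ

/-- Two straight segments cross if their relative interiors (open segments) share a point. -/
def SegCross (a b c d : Pt) : Prop :=
  (openSegment ℝ a b ∩ openSegment ℝ c d).Nonempty

/-- A finite point set is in general position if no three of its points are collinear. -/
def GeneralPosition (S : Finset Pt) : Prop :=
  ∀ a ∈ S, ∀ b ∈ S, ∀ c ∈ S, a ≠ b → a ≠ c → b ≠ c → ¬ Collinear ℝ ({a, b, c} : Set Pt)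

/-- A finite point set is in convex position: it is in general position and every point is an
extreme point of the convex hull (it is not in the convex hull of the other points). -/
def ConvexPosition (S : Finset Pt) : Prop :=
  GeneralPosition S ∧ ∀ x ∈ S, x ∉ convexHull ℝ ((S : Set Pt) \ {x})

/-- Orientation determinant of the triple `a b c`. -/
noncomputable def det2 (a b c : Pt) : ℝ :=
  (b.1 - a.1) * (c.2 - a.2) - (b.2 - a.2) * (c.1 - a.1)

/-- For a point set `T` in general position, the segment `ab` is an edge of the boundary of the
convex hull of `T` iff all other points of `T` lie strictly on one side of the line `ab`. -/
def HullEdge (T : Set Pt) (a b : Pt) : Prop :=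
  a ∈ T ∧ b ∈ T ∧ a ≠ b ∧
    ((∀ x ∈ T, x ≠ a → x ≠ b → 0 < det2 a b x) ∨ (∀ x ∈ T, x ≠ a → x ≠ b → det2 a b x < 0))

/-- `a` is a vertex (extreme point) of the convex hull of `T`. -/
def HullVertex (T : Set Pt) (a : Pt) : Prop :=
  a ∈ T ∧ a ∉ convexHull ℝ (T \ {a})

/-- A plane spanning tree on a finite point set `S`: a tree with vertex set `S` whose
edges, drawn as straight segments, pairwise do not cross. -/
structure PlaneTree (S : Finset Pt) where
  graph : SimpleGraph {x : Pt // x ∈ S}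
  isTree : graph.IsTree
  noncross : ∀ a b c d : {x : Pt // x ∈ S}, graph.Adj a b → graph.Adj c d →
    s(a, b) ≠ s(c, d) → ¬ SegCross a.1 b.1 c.1 d.1

/-- A vertex of a graph is a leaf if it has exactly one neighbour. -/
def IsLeafV {V : Type*} (G : SimpleGraph V) (v : V) : Prop :=
  (G.neighborSet v).ncard = 1

/-- A graph is a path graph (possibly empty or a single vertex) if its vertices can be
enumerated so that adjacency is exactly consecutiveness. -/
def IsPathGraph {V : Type*} (G : SimpleGraph V) : Prop :=
  ∃ (n : ℕ) (f : Fin n ≃ V), ∀ i j : Fin n, G.Adj (f i) (f j) ↔ (i.1 + 1 = j.1 ∨ j.1 + 1 = i.1)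

/-- A caterpillar: a tree in which the non-leaf vertices induce a path
(possibly empty or a single vertex), called the spine. -/
def IsCaterpillar {V : Type*} (G : SimpleGraph V) : Prop :=
  G.IsTree ∧ IsPathGraph (G.induce {v : V | ¬ IsLeafV G v})

/-- A plane spanning caterpillar on `S`. -/
structure PlaneCaterpillar (S : Finset Pt) extends PlaneTree S where
  isCaterpillar : IsCaterpillar graph

/-- A plane spanning path on `S`. -/
structure PlanePath (S : Finset Pt) extends PlaneTree S where
  isPath : IsPathGraph graph

/-- The (closed) triangle spanned by `a`, `b`, `c` contains no point of `S` besides `a,b,c`. -/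
def EmptyTriangle (S : Finset Pt) (a b c : Pt) : Prop :=
  ∀ x ∈ S, x ∈ convexHull ℝ ({a, b, c} : Set Pt) → x = a ∨ x = b ∨ x = c

/-- One caterpillar is obtained from another by a slide: `E₂ = (E₁ \ {ab}) ∪ {ac}` where the
triangle `abc` contains no other point of `S` and `bc ∈ E₁ ∩ E₂`. -/
def SlideAux {S : Finset Pt} (C₁ C₂ : PlaneCaterpillar S) : Prop :=
  ∃ a b c : {x : Pt // x ∈ S},
    C₁.graph.Adj a b ∧ C₁.graph.Adj b c ∧ C₂.graph.Adj b c ∧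
    EmptyTriangle S a.1 b.1 c.1 ∧
    C₂.graph.edgeSet = (C₁.graph.edgeSet \ {s(a, b)}) ∪ {s(a, c)}

/-- The (symmetric) slide relation: the edge relation of the slide graph `G_C^slide(S)`. -/
def Slide {S : Finset Pt} (C₁ C₂ : PlaneCaterpillar S) : Prop :=
  SlideAux C₁ C₂ ∨ SlideAux C₂ C₁

/-- A sequence of `m` slides transforming `C₁` into `C₂`. -/
def SlideSeq {S : Finset Pt} (m : ℕ) (C₁ C₂ : PlaneCaterpillar S) : Prop :=
  ∃ g : ℕ → PlaneCaterpillar S, g 0 = C₁ ∧ g m = C₂ ∧ ∀ i < m, Slide (g i) (g (i + 1))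

/-- Rotation: `E₂ = (E₁ \ {ab}) ∪ {ac}` for distinct edges `ab`, `ac` sharing the endpoint `a`. -/
def RotationAux {S : Finset Pt} (C₁ C₂ : PlaneCaterpillar S) : Prop :=
  ∃ a b c : {x : Pt // x ∈ S}, b ≠ c ∧ C₁.graph.Adj a b ∧
    C₂.graph.edgeSet = (C₁.graph.edgeSet \ {s(a, b)}) ∪ {s(a, c)}

/-- The (symmetric) rotation relation: the edge relation of the rotation graph `G_C^rot(S)`. -/
def Rotation {S : Finset Pt} (C₁ C₂ : PlaneCaterpillar S) : Prop :=
  RotationAux C₁ C₂ ∨ RotationAux C₂ C₁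

/-- Flip of caterpillars: `E₂ = (E₁ \ {e}) ∪ {f}` for edges `e = ab`, `f = cd`. -/
def CatFlipAux {S : Finset Pt} (C₁ C₂ : PlaneCaterpillar S) : Prop :=
  ∃ a b c d : {x : Pt // x ∈ S}, C₁.graph.Adj a b ∧ C₂.graph.Adj c d ∧
    C₂.graph.edgeSet = (C₁.graph.edgeSet \ {s(a, b)}) ∪ {s(c, d)}

/-- The (symmetric) flip relation on caterpillars: edge relation of `G_C^flip(S)`. -/
def CatFlip {S : Finset Pt} (C₁ C₂ : PlaneCaterpillar S) : Prop :=
  CatFlipAux C₁ C₂ ∨ CatFlipAux C₂ C₁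

/-- Compatible flip of caterpillars: a flip whose two exchanged edges do not cross. -/
def CatCompFlipAux {S : Finset Pt} (C₁ C₂ : PlaneCaterpillar S) : Prop :=
  ∃ a b c d : {x : Pt // x ∈ S}, C₁.graph.Adj a b ∧ C₂.graph.Adj c d ∧
    ¬ SegCross a.1 b.1 c.1 d.1 ∧
    C₂.graph.edgeSet = (C₁.graph.edgeSet \ {s(a, b)}) ∪ {s(c, d)}

/-- The (symmetric) compatible flip relation: edge relation of `G_C^comp-flip(S)`. -/
def CatCompFlip {S : Finset Pt} (C₁ C₂ : PlaneCaterpillar S) : Prop :=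
  CatCompFlipAux C₁ C₂ ∨ CatCompFlipAux C₂ C₁

/-- The spanning star on `S` with center `x`. -/
def starGraph (S : Finset Pt) (x : {p : Pt // p ∈ S}) : SimpleGraph {p : Pt // p ∈ S} where
  Adj a b := a ≠ b ∧ (a = x ∨ b = x)
  symm := ⟨fun a b h => ⟨h.1.symm, h.2.symm⟩⟩
  loopless := ⟨fun a h => h.1 rfl⟩

/-- `s` is an endpoint of the spine of the caterpillar `C`: it is a non-leaf vertex having at
most one non-leaf neighbour. -/
def SpineEndpoint {S : Finset Pt} (C : PlaneCaterpillar S) (s : {p : Pt // p ∈ S}) : Prop :=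
  ¬ IsLeafV C.graph s ∧
    ∀ w w' : {p : Pt // p ∈ S}, C.graph.Adj s w → C.graph.Adj s w' →
      ¬ IsLeafV C.graph w → ¬ IsLeafV C.graph w' → w = w'

/-- `C` is a double star with centers `u` and `v`: it contains the edge `uv` and every other
vertex is a leaf adjacent to `u` or to `v`. -/
def IsDoubleStar {S : Finset Pt} (C : PlaneCaterpillar S) (u v : {p : Pt // p ∈ S}) : Prop :=
  C.graph.Adj u v ∧ ∀ w : {p : Pt // p ∈ S}, w ≠ u → w ≠ v →
    IsLeafV C.graph w ∧ (C.graph.Adj u w ∨ C.graph.Adj v w)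

/-- The points of `S` remaining after removing `v 0, …, v (i-1)`. -/
def PeelRest (S : Finset Pt) (v : ℕ → Pt) (i : ℕ) : Set Pt :=
  {x : Pt | x ∈ S ∧ ∀ j < i, v j ≠ x}

/-- `v 0, …, v (n-1)` is a generalized peeling path on `S`: an orientation of a plane spanning
path such that `v 0` is a hull vertex of `S` and each subsequent `v i` is a hull vertex of the
set of remaining points, with the segment from `v (i-1)` not crossing any edge of the hull of
the remaining points. -/
def IsGenPeelingSeq (S : Finset Pt) (n : ℕ) (v : ℕ → Pt) : Prop :=
  (∀ i < n, v i ∈ S) ∧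
  (∀ i < n, ∀ j < n, v i = v j → i = j) ∧
  (∀ x ∈ S, ∃ i < n, v i = x) ∧
  (∀ i j : ℕ, i + 1 < n → j + 1 < n → i ≠ j →
    ¬ SegCross (v i) (v (i + 1)) (v j) (v (j + 1))) ∧
  HullVertex (S : Set Pt) (v 0) ∧
  (∀ i : ℕ, 0 < i → i < n →
    HullVertex (PeelRest S v i) (v i) ∧
    ∀ a b : Pt, HullEdge (PeelRest S v i) a b → ¬ SegCross (v (i - 1)) (v i) a b)

/-- A plane spanning path admits an orientation making it a generalized peeling path. -/
def IsPeelingPath {S : Finset Pt} (P : PlanePath S) : Prop :=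
  ∃ v : ℕ → Pt, IsGenPeelingSeq S S.card v ∧
    ∀ a b : {x : Pt // x ∈ S}, P.graph.Adj a b ↔
      ∃ i : ℕ, i + 1 < S.card ∧
        ((v i = a.1 ∧ v (i + 1) = b.1) ∨ (v i = b.1 ∧ v (i + 1) = a.1))

/-- Flip of plane spanning paths: `E₂ = (E₁ \ {e}) ∪ {f}` for edges `e = ab`, `f = cd`. -/
def PathFlipAux {S : Finset Pt} (P Q : PlanePath S) : Prop :=
  ∃ a b c d : {x : Pt // x ∈ S}, P.graph.Adj a b ∧ Q.graph.Adj c d ∧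
    Q.graph.edgeSet = (P.graph.edgeSet \ {s(a, b)}) ∪ {s(c, d)}

/-- The flip graph `G_P(S)` of plane spanning paths on `S`. -/
def flipGraph (S : Finset Pt) : SimpleGraph (PlanePath S) where
  Adj P Q := P ≠ Q ∧ (PathFlipAux P Q ∨ PathFlipAux Q P)
  symm := ⟨fun P Q h => ⟨h.1.symm, h.2.symm⟩⟩
  loopless := ⟨fun P h => h.1 rfl⟩

/-- The point `u` is an endpoint of the plane spanning path `P`. -/
def IsPathEndpoint {S : Finset Pt} (P : PlanePath S) (u : Pt) : Prop :=
  ∃ hu : u ∈ S, IsLeafV P.graph ⟨u, hu⟩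

/-- The subgraph `G_P^u(S)` of the flip graph induced by the paths with endpoint `u`. -/
def flipGraphU (S : Finset Pt) (u : Pt) :
    SimpleGraph {P : PlanePath S // IsPathEndpoint P u} where
  Adj P Q := (flipGraph S).Adj P.1 Q.1
  symm := ⟨fun P Q h => (flipGraph S).adj_symm h⟩
  loopless := ⟨fun P h => (flipGraph S).loopless.irrefl P.1 h⟩

/-- A caterpillar is well-separated: there is an enumeration `f 0, …, f (k-1)` of its spine
(the non-leaf vertices, in path order) such that for every `i` the convex hull of the set
`S_{1,i}` of the first `i+1` spine vertices together with their leaves contains no other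
point of `S`. -/
def WellSeparated {S : Finset Pt} (C : PlaneCaterpillar S) : Prop :=
  ∃ (k : ℕ) (f : Fin k → {x : Pt // x ∈ S}),
    Function.Injective f ∧
    (∀ w : {x : Pt // x ∈ S}, ¬ IsLeafV C.graph w ↔ ∃ i : Fin k, f i = w) ∧
    (∀ i j : Fin k, C.graph.Adj (f i) (f j) ↔ (i.1 + 1 = j.1 ∨ j.1 + 1 = i.1)) ∧
    (∀ i : Fin k, ∀ x : {x : Pt // x ∈ S},
      (x : Pt) ∈ convexHull ℝ {p : Pt | ∃ (j : Fin k) (w : {x : Pt // x ∈ S}),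
        j ≤ i ∧ p = (w : Pt) ∧ (w = f j ∨ (C.graph.Adj (f j) w ∧ IsLeafV C.graph w))} →
      ∃ (j : Fin k) (w : {x : Pt // x ∈ S}),
        j ≤ i ∧ (x : Pt) = (w : Pt) ∧ (w = f j ∨ (C.graph.Adj (f j) w ∧ IsLeafV C.graph w)))


namespace StarSlide

lemma openSegment_mem {x y z : Pt} (h : z ∈ openSegment ℝ x y) :
    ∃ t : ℝ, 0 < t ∧ t < 1 ∧ z = (1 - t) • x + t • y := by
  rw [openSegment_eq_image] at h
  obtain ⟨t, ht, rfl⟩ := h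
  exact ⟨t, ht.1, ht.2, by module⟩

lemma det2_affine (a b x y : Pt) (t : ℝ) :
    det2 a b ((1 - t) • x + t • y) = (1 - t) * det2 a b x + t * det2 a b y := by
  simp only [det2, Prod.fst_add, Prod.snd_add, Prod.smul_fst, Prod.smul_snd, smul_eq_mul]
  ring

lemma det2_self_right (a b : Pt) : det2 a b b = 0 := by simp [det2]; ring

lemma det2_self_mid (a b : Pt) : det2 a b a = 0 := by simp [det2]

lemma det2_swap12 (a b c : Pt) : det2 b a c = - det2 a b c := by simp [det2]; ring

lemma det2_swap23 (a b c : Pt) : det2 a c b = - det2 a b c := by simp [det2]; ring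

lemma det2_cramer (v u a b c : Pt) :
    det2 v a b * det2 v u c + det2 v b c * det2 v u a + det2 v c a * det2 v u b = 0 := by
  simp [det2]; ring

lemma noCross_sameSide {v a u p : Pt} (h : 0 < det2 v a u * det2 v a p) :
    ¬ SegCross v a u p := by
  rintro ⟨z, hz1, hz2⟩
  obtain ⟨t, ht0, ht1, rfl⟩ := openSegment_mem hz1
  obtain ⟨s, hs0, hs1, hzz⟩ := openSegment_mem hz2
  have e1 : det2 v a ((1-t) • v + t • a) = 0 := by
    rw [det2_affine, det2_self_mid, det2_self_right]; ring
  rw [hzz, det2_affine] at e1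
  rcases mul_pos_iff.1 h with ⟨h1,h2⟩|⟨h1,h2⟩ <;> nlinarith

lemma noCross_oppSide {u v a p : Pt} (h : det2 u v a * det2 u v p < 0) :
    ¬ SegCross v a u p := by
  rintro ⟨z, hz1, hz2⟩
  obtain ⟨t, ht0, ht1, rfl⟩ := openSegment_mem hz1
  obtain ⟨s, hs0, hs1, hzz⟩ := openSegment_mem hz2
  have e1 : det2 u v ((1-t) • v + t • a) = t * det2 u v a := by
    rw [det2_affine, det2_self_right]; ring
  rw [hzz, det2_affine, det2_self_mid] at e1
  rcases mul_neg_iff.1 h with ⟨h1,h2⟩|⟨h1,h2⟩ <;> nlinarith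

lemma noCross_shared {p q r : Pt} (h : det2 p q r ≠ 0) : ¬ SegCross p q p r := by
  rintro ⟨z, hz1, hz2⟩
  obtain ⟨t, ht0, ht1, rfl⟩ := openSegment_mem hz1
  obtain ⟨s, hs0, hs1, hzz⟩ := openSegment_mem hz2
  have e1 : det2 p r ((1-t) • p + t • q) = t * det2 p r q := by
    rw [det2_affine, det2_self_mid]; ring
  have e2 : det2 p r ((1-s) • p + s • r) = 0 := by
    rw [det2_affine, det2_self_mid, det2_self_right]; ring
  rw [hzz] at e1
  rw [e2] at e1
  have : det2 p r q = 0 := by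
    have := ht0.ne'
    field_simp at e1
    exact (mul_eq_zero.1 e1.symm).resolve_left this
  rw [det2_swap23] at h
  simp [this] at h

lemma segCross_swap_left {a b c d : Pt} (h : SegCross a b c d) : SegCross b a c d := by
  rwa [SegCross, openSegment_symm] at h

lemma segCross_comm {a b c d : Pt} (h : SegCross a b c d) : SegCross c d a b := by
  rw [SegCross, Set.inter_comm] at h; exact h

lemma ang_trans {v u a b c : Pt} {τ : ℝ} (hτ : τ * τ = 1)
    (ha : τ * det2 v u a < 0) (hb : τ * det2 v u b < 0) (hc : τ * det2 v u c < 0)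
    (hab : 0 < τ * det2 v a b) (hbc : 0 < τ * det2 v b c) : 0 < τ * det2 v a c := by
  have key := det2_cramer v u a b c
  have h1 : (τ * det2 v a b) * (τ * det2 v u c) < 0 := mul_neg_of_pos_of_neg hab hc
  have h2 : (τ * det2 v b c) * (τ * det2 v u a) < 0 := mul_neg_of_pos_of_neg hbc ha
  have h3 : 0 < (τ * det2 v c a) * (τ * det2 v u b) := by nlinarith
  have h5 : τ * det2 v c a < 0 := by
    by_contra h6
    push_neg at h6
    nlinarith
  have h7 := det2_swap23 v a c
  rw [show det2 v c a = - det2 v a c by rw [det2_swap23]] at h5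
  linarith

lemma segCross_swap_right {a b c d : Pt} (h : SegCross a b c d) : SegCross a b d c :=
  segCross_comm (segCross_swap_left (segCross_comm h))
lemma collinear_of_det2 {a b c : Pt} (h : det2 a b c = 0) :
    Collinear ℝ ({a, b, c} : Set Pt) := by
  by_cases hab : b = a
  · have : ({a, b, c} : Set Pt) = {a, c} := by rw [hab]; ext; simp
    rw [this]
    exact collinear_pair ℝ a c
  · have ha : a ∈ ({a, b, c} : Set Pt) := by simp
    rw [collinear_iff_of_mem ha]
    refine ⟨b - a, ?_⟩
    have key : ∀ p : Pt, det2 a b p = 0 → ∃ r : ℝ, p = r • (b - a) +ᵥ a := by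
      intro p hp
      have hcoord : (b.1 - a.1) * (p.2 - a.2) = (b.2 - a.2) * (p.1 - a.1) := by
        simp only [det2] at hp; linarith
      by_cases h1 : b.1 - a.1 ≠ 0
      · refine ⟨(p.1 - a.1) / (b.1 - a.1), ?_⟩
        have hx : ((p.1 - a.1) / (b.1 - a.1)) * (b.1 - a.1) = p.1 - a.1 := by
          field_simp
        have hy : ((p.1 - a.1) / (b.1 - a.1)) * (b.2 - a.2) = p.2 - a.2 := by
          rw [div_mul_eq_mul_div, div_eq_iff h1]
          linarith [hcoord]
        ext
        · simp only [vadd_eq_add, Prod.fst_add, Prod.smul_fst, smul_eq_mul, Prod.fst_sub]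
          linarith [hx]
        · simp only [vadd_eq_add, Prod.snd_add, Prod.smul_snd, smul_eq_mul, Prod.snd_sub]
          linarith [hy]
      · push_neg at h1
        have h2 : b.2 - a.2 ≠ 0 := by
          intro h2
          apply hab
          ext
          · linarith
          · linarith
        refine ⟨(p.2 - a.2) / (b.2 - a.2), ?_⟩
        have hx : ((p.2 - a.2) / (b.2 - a.2)) * (b.1 - a.1) = p.1 - a.1 := by
          rw [h1, mul_zero]
          have h3 : (b.2 - a.2) * (p.1 - a.1) = 0 := by rw [← hcoord, h1, zero_mul]
          rcases mul_eq_zero.1 h3 with h' | h'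
          · exact absurd h' h2
          · linarith
        have hy : ((p.2 - a.2) / (b.2 - a.2)) * (b.2 - a.2) = p.2 - a.2 := by
          field_simp
        ext
        · simp only [vadd_eq_add, Prod.fst_add, Prod.smul_fst, smul_eq_mul, Prod.fst_sub]
          linarith [hx]
        · simp only [vadd_eq_add, Prod.snd_add, Prod.smul_snd, smul_eq_mul, Prod.snd_sub]
          linarith [hy]
    intro p hp
    simp only [Set.mem_insert_iff, Set.mem_singleton_iff] at hp
    rcases hp with rfl | rfl | hpc
    · exact ⟨0, by simp⟩
    · exact ⟨1, by ext <;> simp [vadd_eq_add]⟩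
    · rw [hpc]; exact key c h

lemma gp_det2 {S : Finset Pt} (hgp : GeneralPosition S) {a b c : Pt}
    (ha : a ∈ S) (hb : b ∈ S) (hc : c ∈ S)
    (hab : a ≠ b) (hac : a ≠ c) (hbc : b ≠ c) : det2 a b c ≠ 0 :=
  fun h => hgp a ha b hb c hc hab hac hbc (collinear_of_det2 h)

lemma exists_min {α : Type*} (r : α → α → Prop) (s : Finset α)
    (htrans : ∀ a ∈ s, ∀ b ∈ s, ∀ c ∈ s, r a b → r b c → r a c)
    (htot : ∀ a ∈ s, ∀ b ∈ s, a ≠ b → r a b ∨ r b a)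
    (hs : s.Nonempty) :
    ∃ m ∈ s, ∀ p ∈ s, p ≠ m → r m p := by
  classical
  induction s using Finset.induction_on with
  | empty => exact absurd hs (by simp)
  | @insert a s ha ih =>
    by_cases hsne : s.Nonempty
    · obtain ⟨m, hm, hmin⟩ := ih
        (fun x hx y hy z hz => htrans x (by simp [hx]) y (by simp [hy]) z (by simp [hz]))
        (fun x hx y hy => htot x (by simp [hx]) y (by simp [hy])) hsne
      have hma : m ≠ a := fun h => ha (h ▸ hm)
      rcases htot m (by simp [hm]) a (by simp) hma with hra | hra
      · refine ⟨m, by simp [hm], ?_⟩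
        intro p hp hpm
        rcases Finset.mem_insert.1 hp with rfl | hp'
        · exact hra
        · exact hmin p hp' hpm
      · refine ⟨a, by simp, ?_⟩
        intro p hp hpa
        rcases Finset.mem_insert.1 hp with rfl | hp'
        · exact absurd rfl hpa
        · by_cases hpm : p = m
          · exact hpm ▸ hra
          · exact htrans a (by simp) m (by simp [hm]) p (by simp [hp']) hra (hmin p hp' hpm)
    · rw [Finset.not_nonempty_iff_eq_empty] at hsne
      subst hsne
      exact ⟨a, by simp, fun p hp hpa => absurd (by simpa using hp) hpa⟩

lemma emptyTriangle_of_convex {S : Finset Pt} (hconv : ConvexPosition S)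
    (a b c : Pt) (ha : a ∈ S) (hb : b ∈ S) (hc : c ∈ S) :
    EmptyTriangle S a b c := by
  intro x hx hxhull
  by_contra hne
  push_neg at hne
  obtain ⟨h1, h2, h3⟩ := hne
  apply hconv.2 x hx
  apply convexHull_mono (show ({a, b, c} : Set Pt) ⊆ (S : Set Pt) \ {x} from ?_) hxhull
  intro y hy
  have hyS : y ∈ S := by
    rcases hy with rfl | hy' <;> [exact ha; skip]
    rcases hy' with rfl | hy'' <;> [exact hb; skip]
    rcases hy'' with rfl <;> exact hc
  have hyx : y ≠ x := by
    rintro rfl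
    rcases hy with rfl | hy'
    · exact h1 rfl
    rcases hy' with rfl | hy''
    · exact h2 rfl
    rcases hy'' with rfl
    exact h3 rfl
  exact ⟨hyS, by simp [hyx]⟩
section DS

variable {S : Finset Pt}

open Classical in
noncomputable def par (u v : {x : Pt // x ∈ S}) (B : Finset {x : Pt // x ∈ S})
    (w : {x : Pt // x ∈ S}) : {x : Pt // x ∈ S} :=
  if w = v then u else if w ∈ B then v else u

def GoodB (u v : {x : Pt // x ∈ S}) (B : Finset {x : Pt // x ∈ S}) : Prop :=
  u ∉ B ∧ v ∉ B ∧ ∀ b ∈ B, ∀ p : {x : Pt // x ∈ S}, p ∉ B → p ≠ u → p ≠ v →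
    ¬ SegCross v.1 b.1 u.1 p.1

def ds (u v : {x : Pt // x ∈ S}) (B : Finset {x : Pt // x ∈ S}) :
    SimpleGraph {x : Pt // x ∈ S} where
  Adj a b := a ≠ b ∧ ((a ≠ u ∧ par u v B a = b) ∨ (b ≠ u ∧ par u v B b = a))
  symm := ⟨fun a b h => ⟨h.1.symm, h.2.symm⟩⟩
  loopless := ⟨fun a h => h.1 rfl⟩

variable {u v : {x : Pt // x ∈ S}} {B : Finset {x : Pt // x ∈ S}}

lemma par_mem (w : {x : Pt // x ∈ S}) : par u v B w = u ∨ par u v B w = v := by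
  unfold par
  split_ifs <;> simp

lemma par_v : par u v B v = u := by simp [par]

lemma par_of_mem (hu : u ∉ B) (hv : v ∉ B) {w : {x : Pt // x ∈ S}} (hw : w ∈ B) :
    par u v B w = v := by
  have : w ≠ v := fun h => hv (h ▸ hw)
  simp [par, this, hw]

lemma par_of_not_mem {w : {x : Pt // x ∈ S}} (hw : w ∉ B) (hwv : w ≠ v) :
    par u v B w = u := by
  simp [par, hwv, hw]

lemma par_ne (huv : u ≠ v) (hu : u ∉ B) (hv : v ∉ B) {w : {x : Pt // x ∈ S}}
    (hw : w ≠ u) : par u v B w ≠ w := by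
  by_cases h1 : w = v
  · subst h1; rw [par_v]; exact huv
  · by_cases h2 : w ∈ B
    · rw [par_of_mem hu hv h2]; exact fun h => h1 h.symm
    · rw [par_of_not_mem h2 h1]; exact fun h => hw h.symm

lemma ds_adj_iff (huv : u ≠ v) (hu : u ∉ B) (hv : v ∉ B) {a b : {x : Pt // x ∈ S}} :
    (ds u v B).Adj a b ↔ ((a ≠ u ∧ par u v B a = b) ∨ (b ≠ u ∧ par u v B b = a)) := by
  constructor
  · exact fun h => h.2
  · intro h
    refine ⟨?_, h⟩
    rcases h with ⟨h1, h2⟩ | ⟨h1, h2⟩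
    · exact fun he => par_ne huv hu hv h1 (h2.trans he.symm)
    · exact fun he => par_ne huv hu hv h1 (h2.trans he)

lemma ds_adj_uv (huv : u ≠ v) (hu : u ∉ B) (hv : v ∉ B) : (ds u v B).Adj u v :=
  (ds_adj_iff huv hu hv).2 (Or.inr ⟨huv.symm, par_v⟩)

lemma ds_adj_par (huv : u ≠ v) (hu : u ∉ B) (hv : v ∉ B) {w : {x : Pt // x ∈ S}}
    (hw : w ≠ u) : (ds u v B).Adj w (par u v B w) :=
  (ds_adj_iff huv hu hv).2 (Or.inl ⟨hw, rfl⟩)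

lemma ds_nbr (huv : u ≠ v) (hu : u ∉ B) (hv : v ∉ B) {w x : {x : Pt // x ∈ S}}
    (hwu : w ≠ u) (hwv : w ≠ v) (h : (ds u v B).Adj w x) : x = par u v B w := by
  rcases (ds_adj_iff huv hu hv).1 h with ⟨_, h2⟩ | ⟨_, h2⟩
  · exact h2.symm
  · exfalso
    rcases par_mem (u := u) (v := v) (B := B) x with h3 | h3 <;> rw [h3] at h2
    · exact hwu h2.symm
    · exact hwv h2.symm

lemma ds_nbr_u (huv : u ≠ v) (hu : u ∉ B) (hv : v ∉ B) {x : {x : Pt // x ∈ S}}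
    (h : (ds u v B).Adj u x) : x = v ∨ (x ∉ B ∧ x ≠ u ∧ x ≠ v) := by
  rcases (ds_adj_iff huv hu hv).1 h with ⟨h1, _⟩ | ⟨h1, h2⟩
  · exact absurd rfl h1
  · by_cases h3 : x = v
    · exact Or.inl h3
    · refine Or.inr ⟨?_, h1, h3⟩
      intro hxB
      rw [par_of_mem hu hv hxB] at h2
      exact huv h2.symm

lemma ds_nbr_v (huv : u ≠ v) (hu : u ∉ B) (hv : v ∉ B) {x : {x : Pt // x ∈ S}}
    (h : (ds u v B).Adj v x) : x = u ∨ x ∈ B := by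
  rcases (ds_adj_iff huv hu hv).1 h with ⟨_, h2⟩ | ⟨h1, h2⟩
  · rw [par_v] at h2; exact Or.inl h2.symm
  · by_cases h3 : x ∈ B
    · exact Or.inr h3
    · left
      exfalso
      by_cases h4 : x = v
      · rw [h4, par_v] at h2; exact huv h2
      · rw [par_of_not_mem h3 h4] at h2; exact huv h2

lemma ds_connected (huv : u ≠ v) (hu : u ∉ B) (hv : v ∉ B) : (ds u v B).Connected := by
  have hreach : ∀ a : {x : Pt // x ∈ S}, (ds u v B).Reachable a u := by
    intro a
    by_cases ha : a = u
    · rw [ha]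
    · have h1 := (ds_adj_par huv hu hv ha).reachable
      rcases par_mem (u := u) (v := v) (B := B) a with h2 | h2
      · rwa [h2] at h1
      · rw [h2] at h1
        exact SimpleGraph.Reachable.trans h1 ((ds_adj_uv huv hu hv).symm.reachable)
  haveI : Nonempty {x : Pt // x ∈ S} := ⟨u⟩
  exact ⟨fun a b => (hreach a).trans (hreach b).symm⟩

lemma ds_acyclic (huv : u ≠ v) (hu : u ∉ B) (hv : v ∉ B) : (ds u v B).IsAcyclic := by
  intro x c hc
  -- find a support vertex outside {u, v}
  have hlen : 3 ≤ c.length := hc.three_le_length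
  have hnodup : c.support.tail.Nodup := hc.support_nodup
  have hlen2 : c.support.tail.length = c.length := by
    simp [SimpleGraph.Walk.length_support]
  have hcard : 3 ≤ c.support.tail.toFinset.card := by
    rw [List.toFinset_card_of_nodup hnodup]
    omega
  have : ∃ w ∈ c.support.tail.toFinset, w ≠ u ∧ w ≠ v := by
    by_contra hcon
    push_neg at hcon
    have hsub : c.support.tail.toFinset ⊆ {u, v} := by
      intro w hw
      have := hcon w hw
      simp only [Finset.mem_insert, Finset.mem_singleton]
      by_cases h1 : w = u
      · exact Or.inl h1
      · exact Or.inr (this h1)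
    have := Finset.card_le_card hsub
    have : ({u, v} : Finset {x : Pt // x ∈ S}).card ≤ 2 := Finset.card_insert_le _ _ |>.trans (by simp)
    omega
  obtain ⟨w, hwmem, hwu, hwv⟩ := this
  have hwsup : w ∈ c.support := List.mem_of_mem_tail (List.mem_toFinset.1 hwmem)
  have hc' : (c.rotate w hwsup).IsCycle := hc.rotate hwsup
  generalize c.rotate w hwsup = c' at hc'
  cases c' with
  | nil => exact hc'.ne_nil rfl
  | cons h q =>
    rename_i y
    -- y is a neighbour of w, so y = par w
    have hy : y = par u v B w := ds_nbr huv hu hv hwu hwv h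
    -- q.reverse is a walk from w to y, not nil
    have hqrev : ¬ (q.reverse).Nil := by
      intro hnil
      have : q.reverse.length = 0 := SimpleGraph.Walk.nil_iff_length_eq.mp hnil
      have hq : q.length = 0 := by simpa using this
      have := hc'.three_le_length
      simp [SimpleGraph.Walk.length_cons] at this
      omega
    cases hq : q.reverse with
    | nil => rw [hq] at hqrev; exact hqrev SimpleGraph.Walk.nil_nil
    | cons h2 q2 =>
      rename_i y2
      have hy2 : y2 = par u v B w := ds_nbr huv hu hv hwu hwv h2
      have hmem : s(w, y2) ∈ q.edges := by
        have : s(w, y2) ∈ q.reverse.edges := by rw [hq]; simp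
        rwa [SimpleGraph.Walk.edges_reverse, List.mem_reverse] at this
      have hed : (SimpleGraph.Walk.cons h q).edges = s(w, y) :: q.edges := rfl
      have hnd := hc'.edges_nodup
      rw [hed] at hnd
      rw [hy2, ← hy] at hmem
      exact (List.nodup_cons.1 hnd).1 hmem

end DS
section DS2

variable {S : Finset Pt} {u v : {x : Pt // x ∈ S}} {B : Finset {x : Pt // x ∈ S}}

lemma not_leaf_of_two {V' : Type*} {G : SimpleGraph V'} {w x y : V'}
    (hx : G.Adj w x) (hy : G.Adj w y) (hxy : x ≠ y) : ¬ IsLeafV G w := by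
  intro h
  obtain ⟨a, ha⟩ := Set.ncard_eq_one.1 h
  have h1 : x ∈ G.neighborSet w := hx
  have h2 : y ∈ G.neighborSet w := hy
  rw [ha] at h1 h2
  exact hxy (h1.trans h2.symm)

lemma leaf_of_unique {V' : Type*} {G : SimpleGraph V'} {w x : V'}
    (hx : G.Adj w x) (huniq : ∀ y, G.Adj w y → y = x) : IsLeafV G w := by
  have : G.neighborSet w = {x} := Set.ext fun y =>
    ⟨fun h => huniq y h, fun h => by rw [Set.mem_singleton_iff] at h; exact h ▸ hx⟩
  rw [IsLeafV, this, Set.ncard_singleton]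

lemma ds_leaf_w (huv : u ≠ v) (hu : u ∉ B) (hv : v ∉ B) {w : {x : Pt // x ∈ S}}
    (hwu : w ≠ u) (hwv : w ≠ v) : IsLeafV (ds u v B) w :=
  leaf_of_unique (ds_adj_par huv hu hv hwu) (fun y h => ds_nbr huv hu hv hwu hwv h)

lemma ds_leaf_u (huv : u ≠ v) (hu : u ∉ B) (hv : v ∉ B)
    (hall : ∀ p : {x : Pt // x ∈ S}, p ∉ B → p = u ∨ p = v) : IsLeafV (ds u v B) u := by
  refine leaf_of_unique (ds_adj_uv huv hu hv) (fun y h => ?_)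
  rcases ds_nbr_u huv hu hv h with h1 | ⟨h1, h2, h3⟩
  · exact h1
  · rcases hall y h1 with h4 | h4
    · exact absurd h4 h2
    · exact absurd h4 h3

lemma ds_leaf_v (huv : u ≠ v) (hu : u ∉ B) (hv : v ∉ B) (hB : B = ∅) :
    IsLeafV (ds u v B) v := by
  refine leaf_of_unique (ds_adj_uv huv hu hv).symm (fun y h => ?_)
  rcases ds_nbr_v huv hu hv h with h1 | h1
  · exact h1
  · rw [hB] at h1; exact absurd h1 (Finset.notMem_empty y)

lemma ds_nonleaf_u (huv : u ≠ v) (hu : u ∉ B) (hv : v ∉ B)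
    {p : {x : Pt // x ∈ S}} (hp : p ∉ B) (hpu : p ≠ u) (hpv : p ≠ v) :
    ¬ IsLeafV (ds u v B) u := by
  have h1 : (ds u v B).Adj p u := by
    have := ds_adj_par huv hu hv hpu
    rwa [par_of_not_mem hp hpv] at this
  exact not_leaf_of_two (ds_adj_uv huv hu hv) h1.symm (Ne.symm hpv)

lemma ds_nonleaf_v (huv : u ≠ v) (hu : u ∉ B) (hv : v ∉ B)
    {b : {x : Pt // x ∈ S}} (hb : b ∈ B) : ¬ IsLeafV (ds u v B) v := by
  have hbv : b ≠ v := fun h => hv (h ▸ hb)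
  have hbu : b ≠ u := fun h => hu (h ▸ hb)
  have h1 : (ds u v B).Adj b v := by
    have := ds_adj_par huv hu hv hbu
    rwa [par_of_mem hu hv hb] at this
  exact not_leaf_of_two (ds_adj_uv huv hu hv).symm h1.symm (Ne.symm hbu)

lemma exists_third (hcard : 3 ≤ S.card) (u v : {x : Pt // x ∈ S}) :
    ∃ p : {x : Pt // x ∈ S}, p ≠ u ∧ p ≠ v := by
  classical
  by_contra h
  push_neg at h
  have hsub : (Finset.univ : Finset {x : Pt // x ∈ S}) ⊆ {u, v} := by
    intro p _
    simp only [Finset.mem_insert, Finset.mem_singleton]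
    by_cases h1 : p = u
    · exact Or.inl h1
    · exact Or.inr (h p h1)
  have h1 := Finset.card_le_card hsub
  have h2 : ({u, v} : Finset {x : Pt // x ∈ S}).card ≤ 2 :=
    (Finset.card_insert_le _ _).trans (by simp)
  have h3 : Fintype.card {x : Pt // x ∈ S} = S.card := Fintype.card_coe S
  rw [Finset.card_univ, h3] at h1
  omega

lemma isPathGraph_single {V' : Type*} (G : SimpleGraph V') (a : V')
    (hset : {x : V' | ¬ IsLeafV G x} = {a}) :
    IsPathGraph (G.induce {x : V' | ¬ IsLeafV G x}) := by
  refine ⟨1, ⟨fun _ => ⟨a, by rw [hset]; rfl⟩, fun _ => 0,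
    fun i => Subsingleton.elim _ _, fun x => ?_⟩, fun i j => ?_⟩
  · apply Subtype.ext
    have h' := (Set.ext_iff.1 hset x.1).1 x.2
    exact h'.symm
  · constructor
    · intro h
      have : G.Adj a a := h
      exact absurd this (G.irrefl)
    · intro h
      rcases i with ⟨i, hi⟩
      rcases j with ⟨j, hj⟩
      simp only at h
      omega

lemma isPathGraph_pair {V' : Type*} (G : SimpleGraph V') (a b : V') (hab : a ≠ b)
    (hadj : G.Adj a b) (hset : {x : V' | ¬ IsLeafV G x} = {a, b}) :
    IsPathGraph (G.induce {x : V' | ¬ IsLeafV G x}) := by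
  classical
  have hamem : a ∈ {x : V' | ¬ IsLeafV G x} := by rw [hset]; exact Or.inl rfl
  have hbmem : b ∈ {x : V' | ¬ IsLeafV G x} := by rw [hset]; exact Or.inr rfl
  refine ⟨2, ⟨fun i => if i.1 = 0 then ⟨a, hamem⟩ else ⟨b, hbmem⟩,
    fun x => if x.1 = a then 0 else 1, fun i => ?_, fun x => ?_⟩, fun i j => ?_⟩
  · rcases i with ⟨i, hi⟩
    interval_cases i <;> simp [hab.symm, hab]
  · by_cases hx : x.1 = a
    · simp only [hx, if_pos rfl]
      exact Subtype.ext hx.symm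
    · have : x.1 = b := by
        have h' := (Set.ext_iff.1 hset x.1).1 x.2
        rcases h' with h | h
        · exact absurd h hx
        · exact h
      simp only [hx, if_neg hx]
      exact Subtype.ext this.symm
  · rcases i with ⟨i, hi⟩
    rcases j with ⟨j, hj⟩
    interval_cases i <;> interval_cases j <;>
      simp [SimpleGraph.comap_adj, hadj, hadj.symm, G.irrefl]

lemma ds_caterpillar (hcard : 3 ≤ S.card) (huv : u ≠ v) (hu : u ∉ B) (hv : v ∉ B) :
    IsCaterpillar (ds u v B) := by
  classical
  refine ⟨⟨ds_connected huv hu hv, ds_acyclic huv hu hv⟩, ?_⟩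
  by_cases hfull : ∃ p : {x : Pt // x ∈ S}, p ∉ B ∧ p ≠ u ∧ p ≠ v
  · obtain ⟨p, hp1, hp2, hp3⟩ := hfull
    by_cases hBne : B.Nonempty
    · obtain ⟨b, hb⟩ := hBne
      apply isPathGraph_pair (ds u v B) u v huv (ds_adj_uv huv hu hv)
      ext x
      simp only [Set.mem_setOf_eq, Set.mem_insert_iff, Set.mem_singleton_iff]
      constructor
      · intro h
        by_contra hcon
        push_neg at hcon
        exact h (ds_leaf_w huv hu hv hcon.1 hcon.2)
      · rintro (rfl | rfl)
        · exact ds_nonleaf_u huv hu hv hp1 hp2 hp3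
        · exact ds_nonleaf_v huv hu hv hb
    · rw [Finset.not_nonempty_iff_eq_empty] at hBne
      apply isPathGraph_single (ds u v B) u
      ext x
      simp only [Set.mem_setOf_eq, Set.mem_singleton_iff]
      constructor
      · intro h
        by_contra hcon
        by_cases hxv : x = v
        · rw [hxv] at h; exact h (ds_leaf_v huv hu hv hBne)
        · exact h (ds_leaf_w huv hu hv hcon hxv)
      · rintro rfl
        exact ds_nonleaf_u huv hu hv hp1 hp2 hp3
  · push_neg at hfull
    have hBne : B.Nonempty := by
      obtain ⟨p, hp1, hp2⟩ := exists_third hcard u v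
      by_cases h : p ∈ B
      · exact ⟨p, h⟩
      · exact absurd (hfull p h hp1) hp2
    obtain ⟨b, hb⟩ := hBne
    apply isPathGraph_single (ds u v B) v
    ext x
    simp only [Set.mem_setOf_eq, Set.mem_singleton_iff]
    constructor
    · intro h
      by_contra hcon
      by_cases hxu : x = u
      · rw [hxu] at h
        refine h (ds_leaf_u huv hu hv (fun p hp => ?_))
        by_cases h1 : p = u
        · exact Or.inl h1
        · exact Or.inr (hfull p hp h1)
      · exact h (ds_leaf_w huv hu hv hxu hcon)
    · rintro rfl
      exact ds_nonleaf_v huv hu hv hb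

end DS2
section DS3

variable {S : Finset Pt} {u v : {x : Pt // x ∈ S}} {B : Finset {x : Pt // x ∈ S}}

lemma subne {a b : {x : Pt // x ∈ S}} (h : a ≠ b) : a.1 ≠ b.1 :=
  fun hh => h (Subtype.ext hh)

lemma gp_det2' (hgp : GeneralPosition S) {a b c : {x : Pt // x ∈ S}}
    (hab : a ≠ b) (hac : a ≠ c) (hbc : b ≠ c) : det2 a.1 b.1 c.1 ≠ 0 :=
  gp_det2 hgp a.2 b.2 c.2 (subne hab) (subne hac) (subne hbc)

lemma mem_of_par_eq_v (huv : u ≠ v) {a : {x : Pt // x ∈ S}} (h : par u v B a = v) :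
    a ∈ B := by
  by_cases h1 : a = v
  · rw [h1, par_v] at h; exact absurd h huv
  · by_contra h2
    rw [par_of_not_mem h2 h1] at h
    exact huv h

lemma not_mem_of_par_eq_u (huv : u ≠ v) (hu : u ∉ B) (hv : v ∉ B)
    {a : {x : Pt // x ∈ S}} (h : par u v B a = u) : a ∉ B := by
  intro h1
  rw [par_of_mem hu hv h1] at h
  exact huv h.symm

lemma ds_noncross_core (hgp : GeneralPosition S) (huv : u ≠ v) (hGood : GoodB u v B)
    (a c : {x : Pt // x ∈ S}) (hau : a ≠ u) (hcu : c ≠ u)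
    (hne : s(a, par u v B a) ≠ s(c, par u v B c)) :
    ¬ SegCross a.1 (par u v B a).1 c.1 (par u v B c).1 := by
  obtain ⟨hu, hv, hG⟩ := hGood
  set pa := par u v B a with hpa
  set pc := par u v B c with hpc
  have hapa : pa ≠ a := par_ne huv hu hv hau
  have hcpc : pc ≠ c := par_ne huv hu hv hcu
  have hac : a ≠ c := by rintro rfl; exact hne rfl
  by_cases hpp : pa = pc
  · -- shared endpoint pa = pc
    have hpac : pa ≠ c := hpp ▸ hcpc
    have hdet : det2 pa.1 a.1 c.1 ≠ 0 := gp_det2' hgp hapa hpac hac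
    intro hcr
    rw [← hpp] at hcr
    exact noCross_shared hdet (segCross_swap_right (segCross_swap_left hcr))
  by_cases hapc : a = pc
  · -- shared endpoint a = pc
    have hpac : pa ≠ c := by
      rintro rfl
      exact hne (by rw [← hapc, Sym2.eq_swap])
    have hdet : det2 a.1 pa.1 c.1 ≠ 0 := gp_det2' hgp (Ne.symm hapa) hac hpac
    intro hcr
    rw [← hapc] at hcr
    exact noCross_shared hdet (segCross_swap_right hcr)
  by_cases hcpa : c = pa
  · -- shared endpoint c = pa
    have hdet : det2 c.1 a.1 pc.1 ≠ 0 := gp_det2' hgp (Ne.symm hac) (Ne.symm hcpc) hapc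
    intro hcr
    rw [← hcpa] at hcr
    exact noCross_shared hdet (segCross_swap_left hcr)
  · -- all four distinct
    rcases par_mem (u := u) (v := v) (B := B) a with hA | hA <;>
      rcases par_mem (u := u) (v := v) (B := B) c with hC | hC
    · exact absurd (hA.trans hC.symm) hpp
    · -- pa = u, pc = v : c ∈ B, a outside
      have hcB : c ∈ B := mem_of_par_eq_v huv (hpc ▸ hC)
      have haB : a ∉ B := not_mem_of_par_eq_u huv hu hv (hpa ▸ hA)
      have hav : a ≠ v := fun h => hapc (h.trans hC.symm)
      have := hG c hcB a haB hau hav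
      intro hcr
      rw [hpa.trans hA, hpc.trans hC] at hcr
      exact this (segCross_swap_right (segCross_swap_left (segCross_comm hcr)))
    · -- pa = v, pc = u : a ∈ B, c outside
      have haB : a ∈ B := mem_of_par_eq_v huv (hpa ▸ hA)
      have hcB : c ∉ B := not_mem_of_par_eq_u huv hu hv (hpc ▸ hC)
      have hcv : c ≠ v := fun h => hcpa (h.trans hA.symm)
      have := hG a haB c hcB hcu hcv
      intro hcr
      rw [hpa.trans hA, hpc.trans hC] at hcr
      exact this (segCross_swap_right (segCross_swap_left hcr))
    · exact absurd (hA.trans hC.symm) hpp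

lemma ds_noncross (hgp : GeneralPosition S) (huv : u ≠ v) (hGood : GoodB u v B) :
    ∀ a b c d : {x : Pt // x ∈ S}, (ds u v B).Adj a b → (ds u v B).Adj c d →
      s(a, b) ≠ s(c, d) → ¬ SegCross a.1 b.1 c.1 d.1 := by
  have hu := hGood.1
  have hv := hGood.2.1
  intro a b c d hab hcd hne
  rcases (ds_adj_iff huv hu hv).1 hab with ⟨h1, h2⟩ | ⟨h1, h2⟩ <;>
    rcases (ds_adj_iff huv hu hv).1 hcd with ⟨h3, h4⟩ | ⟨h3, h4⟩
  · rw [← h2, ← h4]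
    exact ds_noncross_core hgp huv hGood a c h1 h3 (by rw [h2, h4]; exact hne)
  · rw [← h2, ← h4]
    intro hcr
    exact ds_noncross_core hgp huv hGood a d h1 h3
      (by rw [h2, h4]; rw [Sym2.eq_swap (a := c)] at hne; exact hne)
      (segCross_swap_right hcr)
  · rw [← h2, ← h4]
    intro hcr
    exact ds_noncross_core hgp huv hGood b c h1 h3
      (by rw [h2, h4]; rw [Sym2.eq_swap (a := a)] at hne; exact hne)
      (segCross_swap_left hcr)
  · rw [← h2, ← h4]
    intro hcr
    exact ds_noncross_core hgp huv hGood b d h1 h3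
      (by rw [h2, h4]; rw [Sym2.eq_swap (a := a), Sym2.eq_swap (a := c)] at hne; exact hne)
      (segCross_swap_right (segCross_swap_left hcr))

noncomputable def mkDS (hcard : 3 ≤ S.card) (hconv : ConvexPosition S)
    (huv : u ≠ v) (B : Finset {x : Pt // x ∈ S}) (hGood : GoodB u v B) :
    PlaneCaterpillar S where
  graph := ds u v B
  isTree := ⟨ds_connected huv hGood.1 hGood.2.1, ds_acyclic huv hGood.1 hGood.2.1⟩
  noncross := fun a b c d hab hcd hne => ds_noncross hconv.1 huv hGood a b c d hab hcd hne
  isCaterpillar := ds_caterpillar hcard huv hGood.1 hGood.2.1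

end DS3
section DS4

variable {S : Finset Pt} {u v : {x : Pt // x ∈ S}} {B : Finset {x : Pt // x ∈ S}}

lemma cat_ext {C1 C2 : PlaneCaterpillar S} (h : C1.graph = C2.graph) : C1 = C2 := by
  obtain ⟨⟨g1, t1, n1⟩, c1⟩ := C1
  obtain ⟨⟨g2, t2, n2⟩, c2⟩ := C2
  simp only at h
  subst h
  rfl

lemma ds_empty (huv : u ≠ v) : ds u v (∅ : Finset {x : Pt // x ∈ S}) = starGraph S u := by
  have hpar : ∀ w : {x : Pt // x ∈ S}, par u v (∅ : Finset {x : Pt // x ∈ S}) w = u := by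
    intro w
    by_cases hw : w = v <;> simp [par, hw]
  ext a b
  constructor
  · rintro ⟨hne, ⟨h1, h2⟩ | ⟨h1, h2⟩⟩
    · exact ⟨hne, Or.inr (((hpar a).symm.trans h2).symm)⟩
    · exact ⟨hne, Or.inl (((hpar b).symm.trans h2).symm)⟩
  · rintro ⟨hne, h | h⟩
    · exact ⟨hne, Or.inr ⟨fun hb => hne (h.trans hb.symm), (hpar b).trans h.symm⟩⟩
    · exact ⟨hne, Or.inl ⟨fun ha => hne (ha.trans h.symm), (hpar a).trans h.symm⟩⟩

lemma ds_full (huv : u ≠ v) :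
    ds u v (Finset.univ \ {u, v} : Finset {x : Pt // x ∈ S}) = starGraph S v := by
  classical
  set Bf : Finset {x : Pt // x ∈ S} := Finset.univ \ {u, v} with hBf
  have hmem : ∀ w : {x : Pt // x ∈ S}, w ∈ Bf ↔ (w ≠ u ∧ w ≠ v) := by
    intro w; simp [hBf]
  have hparf : ∀ w : {x : Pt // x ∈ S}, w ≠ u → w ≠ v → par u v Bf w = v := by
    intro w h1 h2
    rw [par_of_mem ((hmem u).not.2 (by simp)) ((hmem v).not.2 (by simp)) ((hmem w).2 ⟨h1, h2⟩)]
  ext a b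
  constructor
  · rintro ⟨hne, ⟨h1, h2⟩ | ⟨h1, h2⟩⟩
    · by_cases hav : a = v
      · exact ⟨hne, Or.inl hav⟩
      · exact ⟨hne, Or.inr (((hparf a h1 hav).symm.trans h2).symm)⟩
    · by_cases hbv : b = v
      · exact ⟨hne, Or.inr hbv⟩
      · exact ⟨hne, Or.inl (((hparf b h1 hbv).symm.trans h2).symm)⟩
  · rintro ⟨hne, h | h⟩
    · -- a = v
      by_cases hbu : b = u
      · refine ⟨hne, Or.inl ⟨?_, ?_⟩⟩
        · rw [h]; exact Ne.symm huv
        · rw [h, par_v, hbu]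
      · refine ⟨hne, Or.inr ⟨hbu, ?_⟩⟩
        rw [hparf b hbu (fun hb => hne (h.trans hb.symm)), h]
    · -- b = v
      by_cases hau : a = u
      · refine ⟨hne, Or.inr ⟨?_, ?_⟩⟩
        · rw [h]; exact Ne.symm huv
        · rw [h, par_v, hau]
      · refine ⟨hne, Or.inl ⟨hau, ?_⟩⟩
        rw [hparf a hau (fun ha => hne (ha.trans h.symm)), h]

variable {t : {x : Pt // x ∈ S}}

lemma par_insert_self (hu : u ∉ B) (hv : v ∉ B) (ht2 : t ≠ u) (ht3 : t ≠ v) :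
    par u v (insert t B) t = v := by
  classical
  exact par_of_mem (by simp [Finset.mem_insert, Ne.symm ht2, hu])
    (by simp [Finset.mem_insert, Ne.symm ht3, hv]) (Finset.mem_insert_self t B)

lemma par_insert_other {w : {x : Pt // x ∈ S}} (hw : w ≠ t) :
    par u v (insert t B) w = par u v B w := by
  classical
  by_cases h1 : w = v
  · simp [par, h1]
  · by_cases h2 : w ∈ B <;> simp [par, h1, h2, Finset.mem_insert, hw]

lemma slide_edges (huv : u ≠ v) (hu : u ∉ B) (hv : v ∉ B)
    (ht1 : t ∉ B) (ht2 : t ≠ u) (ht3 : t ≠ v) :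
    (ds u v (insert t B)).edgeSet =
      ((ds u v B).edgeSet \ {s(t, u)}) ∪ {s(t, v)} := by
  classical
  have hu' : u ∉ insert t B := by simp [Finset.mem_insert, Ne.symm ht2, hu]
  have hv' : v ∉ insert t B := by simp [Finset.mem_insert, Ne.symm ht3, hv]
  have hpart : par u v B t = u := par_of_not_mem ht1 ht3
  apply Set.eq_of_subset_of_subset
  · -- ⊆
    intro e he
    have key : ∀ w : {x : Pt // x ∈ S}, w ≠ u →
        s(w, par u v (insert t B) w) ∈ ((ds u v B).edgeSet \ {s(t, u)}) ∪ {s(t, v)} := by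
      intro w hwu
      by_cases hwt : w = t
      · subst hwt
        rw [par_insert_self hu hv ht2 ht3]
        exact Or.inr rfl
      · rw [par_insert_other hwt]
        left
        refine ⟨(SimpleGraph.mem_edgeSet _).2 (ds_adj_par huv hu hv hwu), ?_⟩
        simp only [Set.mem_singleton_iff]
        intro hcon
        rcases Sym2.eq_iff.1 hcon with ⟨h1, h2⟩ | ⟨h1, h2⟩
        · exact hwt h1
        · exact hwu h1
    induction e using Sym2.ind with
    | _ a b =>
      rw [SimpleGraph.mem_edgeSet] at he
      rcases (ds_adj_iff huv hu' hv').1 he with ⟨h1, h2⟩ | ⟨h1, h2⟩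
      · rw [← h2]; exact key a h1
      · rw [← h2, Sym2.eq_swap (a := par u v (insert t B) b) (b := b)]
        exact key b h1
  · -- ⊇
    rintro e (⟨he, hne⟩ | he)
    · simp only [Set.mem_singleton_iff] at hne
      induction e using Sym2.ind with
      | _ a b =>
        rw [SimpleGraph.mem_edgeSet] at he
        have key : ∀ w : {x : Pt // x ∈ S}, w ≠ u → s(w, par u v B w) ≠ s(t, u) →
            s(w, par u v B w) ∈ (ds u v (insert t B)).edgeSet := by
          intro w hwu hne'
          have hwt : w ≠ t := by
            rintro rfl
            exact hne' (by rw [hpart])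
          have : (ds u v (insert t B)).Adj w (par u v B w) := by
            have := ds_adj_par (B := insert t B) huv hu' hv' hwu
            rwa [par_insert_other hwt] at this
          exact (SimpleGraph.mem_edgeSet _).2 this
        rcases (ds_adj_iff huv hu hv).1 he with ⟨h1, h2⟩ | ⟨h1, h2⟩
        · rw [← h2] at hne ⊢; exact key a h1 hne
        · rw [← h2, Sym2.eq_swap (a := par u v B b) (b := b)] at hne ⊢
          exact key b h1 hne
    · simp only [Set.mem_singleton_iff] at he
      rw [he]
      have : (ds u v (insert t B)).Adj t v := by
        have := ds_adj_par (B := insert t B) huv hu' hv' ht2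
        rwa [par_insert_self hu hv ht2 ht3] at this
      exact (SimpleGraph.mem_edgeSet _).2 this

end DS4
section Step

variable {S : Finset Pt} {u v : {x : Pt // x ∈ S}} {B : Finset {x : Pt // x ∈ S}}

lemma pos_of_tau {τ x y : ℝ} (hττ : τ * τ = 1) (h : 0 < (τ * x) * (τ * y)) : 0 < x * y := by
  nlinarith

lemma neg_of_tau {τ x y : ℝ} (hττ : τ * τ = 1) (h : (τ * x) * (τ * y) < 0) : x * y < 0 := by
  nlinarith

lemma good_step (hgp : GeneralPosition S) (huv : u ≠ v) (hGood : GoodB u v B)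
    {t0 : {x : Pt // x ∈ S}} (h0 : t0 ∉ B) (h0u : t0 ≠ u) (h0v : t0 ≠ v) :
    ∃ t : {x : Pt // x ∈ S}, t ∉ B ∧ t ≠ u ∧ t ≠ v ∧ GoodB u v (insert t B) := by
  classical
  set τ : ℝ := if 0 < det2 u.1 v.1 t0.1 then 1 else -1 with hτdef
  have hττ : τ * τ = 1 := by
    rw [hτdef]; split_ifs <;> norm_num
  have hτne : τ ≠ 0 := fun h => by rw [h, mul_zero] at hττ; exact zero_ne_one hττ
  set P : Finset {x : Pt // x ∈ S} :=
    Finset.univ.filter (fun p => (p ∉ B ∧ p ≠ u ∧ p ≠ v) ∧ 0 < τ * det2 u.1 v.1 p.1) with hPdef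
  have hmemP : ∀ p : {x : Pt // x ∈ S}, p ∈ P ↔
      ((p ∉ B ∧ p ≠ u ∧ p ≠ v) ∧ 0 < τ * det2 u.1 v.1 p.1) := by
    intro p; simp [hPdef]
  have ht0P : t0 ∈ P := by
    rw [hmemP]
    refine ⟨⟨h0, h0u, h0v⟩, ?_⟩
    have hne := gp_det2' hgp huv (Ne.symm h0u) (Ne.symm h0v)
    rw [hτdef]
    split_ifs with hpos
    · linarith
    · have : det2 u.1 v.1 t0.1 < 0 := lt_of_le_of_ne (not_lt.1 hpos) hne
      nlinarith
  have hside : ∀ p ∈ P, τ * det2 v.1 u.1 p.1 < 0 := by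
    intro p hp
    have h1 := ((hmemP p).1 hp).2
    rw [det2_swap12]
    linarith
  obtain ⟨m, hmP, hmin⟩ := exists_min (fun x y : {x : Pt // x ∈ S} => 0 < τ * det2 v.1 x.1 y.1) P
    (fun a ha b hb c hc hab hbc =>
      ang_trans hττ (hside a ha) (hside b hb) (hside c hc) hab hbc)
    (fun a ha b hb hab => by
      have h1 : det2 v.1 a.1 b.1 ≠ 0 :=
        gp_det2' hgp (Ne.symm ((hmemP a).1 ha).1.2.2) (Ne.symm ((hmemP b).1 hb).1.2.2) hab
      rcases lt_or_gt_of_ne (mul_ne_zero hτne h1) with h2 | h2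
      · right
        show 0 < τ * det2 v.1 b.1 a.1
        rw [det2_swap23 v.1 a.1 b.1]
        linarith
      · exact Or.inl h2)
    ⟨t0, ht0P⟩
  obtain ⟨⟨hm1, hm2, hm3⟩, hmside⟩ := (hmemP m).1 hmP
  refine ⟨m, hm1, hm2, hm3, ?_, ?_, ?_⟩
  · simp [Finset.mem_insert, Ne.symm hm2, hGood.1]
  · simp [Finset.mem_insert, Ne.symm hm3, hGood.2.1]
  · intro b hb p hp hpu hpv
    have hpB : p ∉ B := fun h => hp (Finset.mem_insert_of_mem h)
    have hpm : p ≠ m := fun h => hp (h ▸ Finset.mem_insert_self m B)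
    rcases Finset.mem_insert.1 hb with rfl | hbB
    · -- b = m : the new edge v–m versus u–p
      by_cases hpside : 0 < τ * det2 u.1 v.1 p.1
      · -- same side
        have hpP : p ∈ P := (hmemP p).2 ⟨⟨hpB, hpu, hpv⟩, hpside⟩
        have h1 : 0 < τ * det2 v.1 b.1 p.1 := hmin p hpP hpm
        have h2 : 0 < τ * det2 v.1 b.1 u.1 := by
          rw [det2_swap23 v.1 u.1 b.1, det2_swap12 u.1 v.1 b.1]
          linarith [hmside]
        exact noCross_sameSide (pos_of_tau hττ (mul_pos h2 h1))
      · -- opposite side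
        have hpne : det2 u.1 v.1 p.1 ≠ 0 :=
          gp_det2' hgp huv (Ne.symm hpu) (Ne.symm hpv)
        have h1 : τ * det2 u.1 v.1 p.1 < 0 :=
          lt_of_le_of_ne (not_lt.1 hpside) (mul_ne_zero hτne hpne)
        exact noCross_oppSide (neg_of_tau hττ (mul_neg_of_pos_of_neg hmside h1))
    · exact hGood.2.2 b hbB p hpB hpu hpv

lemma goodB_empty : GoodB u v (∅ : Finset {x : Pt // x ∈ S}) :=
  ⟨Finset.notMem_empty u, Finset.notMem_empty v,
    fun b hb => absurd hb (Finset.notMem_empty b)⟩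

lemma goodB_full (huv : u ≠ v) :
    GoodB u v (Finset.univ \ {u, v} : Finset {x : Pt // x ∈ S}) := by
  classical
  refine ⟨by simp, by simp, fun b hb p hp hpu hpv => ?_⟩
  exact absurd (by simp [hpu, hpv] : p ∈ Finset.univ \ ({u, v} : Finset {x : Pt // x ∈ S})) hp

lemma slideSeq_cons {m : ℕ} {C1 C2 C3 : PlaneCaterpillar S}
    (h : Slide C1 C2) (hs : SlideSeq m C2 C3) : SlideSeq (m + 1) C1 C3 := by
  obtain ⟨g, hg0, hgm, hstep⟩ := hs
  refine ⟨fun i => if i = 0 then C1 else g (i - 1), by simp, by simp [hgm], ?_⟩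
  intro i hi
  rcases Nat.eq_zero_or_pos i with rfl | hipos
  · simpa [hg0] using h
  · have h1 : i ≠ 0 := Nat.pos_iff_ne_zero.1 hipos
    have h2 : i + 1 ≠ 0 := Nat.succ_ne_zero i
    simp only [h1, h2, if_neg, if_false]
    have h3 : i - 1 + 1 = i + 1 - 1 := by omega
    have := hstep (i - 1) (by omega)
    rw [h3] at this
    exact this

lemma main_seq (hcard : 3 ≤ S.card) (hconv : ConvexPosition S) (huv : u ≠ v) :
    ∀ m : ℕ, ∀ B : Finset {x : Pt // x ∈ S}, ∀ hG : GoodB u v B,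
      (Finset.univ.filter (fun p => p ∉ B ∧ p ≠ u ∧ p ≠ v)).card = m →
      SlideSeq m (mkDS hcard hconv huv B hG)
        (mkDS hcard hconv huv (Finset.univ \ {u, v}) (goodB_full huv)) := by
  classical
  intro m
  induction m with
  | zero =>
    intro B hG hzero
    have hempty : Finset.univ.filter
        (fun p : {x : Pt // x ∈ S} => p ∉ B ∧ p ≠ u ∧ p ≠ v) = ∅ :=
      Finset.card_eq_zero.1 hzero
    have hBeq : B = Finset.univ \ {u, v} := by
      ext p
      simp only [Finset.mem_sdiff, Finset.mem_univ, true_and, Finset.mem_insert,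
        Finset.mem_singleton]
      constructor
      · intro hpB
        push_neg
        exact ⟨fun h => hG.1 (h ▸ hpB), fun h => hG.2.1 (h ▸ hpB)⟩
      · intro hpuv
        push_neg at hpuv
        by_contra hpB
        have : p ∈ Finset.univ.filter
            (fun p : {x : Pt // x ∈ S} => p ∉ B ∧ p ≠ u ∧ p ≠ v) := by
          simp [hpB, hpuv.1, hpuv.2]
        rw [hempty] at this
        exact absurd this (Finset.notMem_empty p)
    have hgeq : mkDS hcard hconv huv B hG =
        mkDS hcard hconv huv (Finset.univ \ {u, v}) (goodB_full huv) := by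
      apply cat_ext
      show ds u v B = ds u v (Finset.univ \ {u, v})
      rw [hBeq]
    exact ⟨fun _ => mkDS hcard hconv huv B hG, rfl, hgeq.symm ▸ rfl,
      fun i hi => absurd hi (Nat.not_lt_zero i)⟩
  | succ m ih =>
    intro B hG hsucc
    have hRne : (Finset.univ.filter
        (fun p : {x : Pt // x ∈ S} => p ∉ B ∧ p ≠ u ∧ p ≠ v)).Nonempty := by
      rw [← Finset.card_pos, hsucc]; omega
    obtain ⟨t0, ht0⟩ := hRne
    rw [Finset.mem_filter] at ht0
    obtain ⟨-, h01, h02, h03⟩ := ht0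
    obtain ⟨t, ht1, ht2, ht3, hG'⟩ := good_step hconv.1 huv hG h01 h02 h03
    have hu : u ∉ B := hG.1
    have hv : v ∉ B := hG.2.1
    -- card decreases
    have hcardnext : (Finset.univ.filter
        (fun p : {x : Pt // x ∈ S} => p ∉ insert t B ∧ p ≠ u ∧ p ≠ v)).card = m := by
      have heq : Finset.univ.filter
          (fun p : {x : Pt // x ∈ S} => p ∉ insert t B ∧ p ≠ u ∧ p ≠ v) =
          (Finset.univ.filter
            (fun p : {x : Pt // x ∈ S} => p ∉ B ∧ p ≠ u ∧ p ≠ v)).erase t := by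
        ext p
        simp only [Finset.mem_filter, Finset.mem_erase, Finset.mem_univ, true_and,
          Finset.mem_insert, not_or]
        tauto
      rw [heq, Finset.card_erase_of_mem (by simp [ht1, ht2, ht3]), hsucc]
      omega
    -- the slide
    have hadj_tu : (ds u v B).Adj t u := by
      have := ds_adj_par huv hu hv ht2
      rwa [par_of_not_mem ht1 ht3] at this
    have hslide : Slide (mkDS hcard hconv huv B hG) (mkDS hcard hconv huv (insert t B) hG') := by
      left
      refine ⟨t, u, v, hadj_tu, ds_adj_uv huv hu hv, ds_adj_uv huv hG'.1 hG'.2.1, ?_, ?_⟩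
      · exact emptyTriangle_of_convex hconv t.1 u.1 v.1 t.2 u.2 v.2
      · exact slide_edges huv hu hv ht1 ht2 ht3
    exact slideSeq_cons hslide (ih (insert t B) hG' hcardnext)

end Step
end StarSlide

/-- For `S` in convex position with `n ≥ 3` points and distinct `u, v ∈ S`,
the spanning star with center `u` can be transformed into the spanning star with center `v`
using at most `n - 2` slides. -/
theorem star_to_star_convex (S : Finset Pt)
    (hcard : 3 ≤ S.card) (hconv : ConvexPosition S)
    (u v : {p : Pt // p ∈ S}) (huv : u ≠ v)
    (Cu : PlaneCaterpillar S) (hCu : Cu.graph = starGraph S u) :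
    ∃ Cv : PlaneCaterpillar S, Cv.graph = starGraph S v ∧
      ∃ m ≤ S.card - 2, SlideSeq m Cu Cv := by
  classical
  have hGe : StarSlide.GoodB u v (∅ : Finset {x : Pt // x ∈ S}) := StarSlide.goodB_empty
  set m0 := (Finset.univ.filter
    (fun p : {x : Pt // x ∈ S} => p ∉ (∅ : Finset {x : Pt // x ∈ S}) ∧ p ≠ u ∧ p ≠ v)).card
    with hm0def
  have hm0 : m0 = S.card - 2 := by
    have heq : Finset.univ.filter
        (fun p : {x : Pt // x ∈ S} => p ∉ (∅ : Finset {x : Pt // x ∈ S}) ∧ p ≠ u ∧ p ≠ v) =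
        Finset.univ \ ({u, v} : Finset {x : Pt // x ∈ S}) := by
      ext p; simp
    have hcard2 : ({u, v} : Finset {x : Pt // x ∈ S}).card = 2 := by
      rw [Finset.card_insert_of_notMem (by simp [huv]), Finset.card_singleton]
    rw [hm0def, heq, Finset.card_sdiff_of_subset (Finset.subset_univ _), Finset.card_univ,
      Fintype.card_coe, hcard2]
  have hseq := StarSlide.main_seq hcard hconv huv m0 ∅ hGe rfl
  have hCueq : Cu = StarSlide.mkDS hcard hconv huv ∅ hGe :=
    StarSlide.cat_ext (hCu.trans (StarSlide.ds_empty huv).symm)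
  refine ⟨StarSlide.mkDS hcard hconv huv (Finset.univ \ {u, v}) (StarSlide.goodB_full huv),
    StarSlide.ds_full huv, m0, le_of_eq hm0, ?_⟩
  rw [hCueq]
  exact hseq
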